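/- Fix d, N, H ∈ ℕ with d ≥ 1, a regularization parameter λ > 0, and data φ_1,…,φ_N ∈ ℝ^d, r'_1,…,r'_N ∈ ℝ, ψ_1,…,ψ_N ∈ ℝ^d. Define the fitted Q-iteration (FQI) weights by ŵ_{H+1} := 0 and, for h = H, H−1, …, 0, ŵ_h := the unique global minimizer over w ∈ ℝ^d of the ridge objective w ↦ Σ_{n=1}^N (φ_nᵀw − r'_n − ψ_nᵀŵ_{h+1})² + λ‖w‖_2². Define the model-based (plug-in) weights by w̄_{H+1} := 0 and w̄_h := R̂ + M̂ w̄_{h+1} for h = H, …, 0. Then ŵ_h = w̄_h for every h = 0, 1, …, H+1; in particular, for every ν_0 ∈ ℝ^d the FQI value estimate ν_0ᵀŵ_0 equals the plug-in value estimate ν_0ᵀw̄_0. -/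

import Mathlib

open Matrix Finset

lemma vecMulVec_mulVec' {d : ℕ} (a b x : Fin d → ℝ) :
    vecMulVec a b *ᵥ x = (b ⬝ᵥ x) • a := by
  ext i
  simp [vecMulVec, mulVec, dotProduct, Finset.mul_sum, mul_assoc, mul_comm, mul_left_comm]

lemma sum_mulVec' {d N : ℕ} (A : Fin N → Matrix (Fin d) (Fin d) ℝ) (x : Fin d → ℝ) :
    (∑ n, A n) *ᵥ x = ∑ n, A n *ᵥ x := by
  ext i
  simp [mulVec, dotProduct, Matrix.sum_apply, Finset.sum_mul]
  rw [Finset.sum_comm]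

lemma sum_dotProduct' {d N : ℕ} (v : Fin N → Fin d → ℝ) (w : Fin d → ℝ) :
    (∑ n, v n) ⬝ᵥ w = ∑ n, v n ⬝ᵥ w := by
  simp [dotProduct, Finset.sum_apply, Finset.sum_mul]
  rw [Finset.sum_comm]

lemma dotProduct_sum' {d N : ℕ} (w : Fin d → ℝ) (v : Fin N → Fin d → ℝ) :
    w ⬝ᵥ (∑ n, v n) = ∑ n, w ⬝ᵥ v n := by
  simp [dotProduct, Finset.sum_apply, Finset.mul_sum]
  rw [Finset.sum_comm]

lemma quadform {d N : ℕ} (lam : ℝ) (φ : Fin N → Fin d → ℝ)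
    (Shat : Matrix (Fin d) (Fin d) ℝ)
    (hShat : Shat = lam • (1 : Matrix (Fin d) (Fin d) ℝ) + ∑ n, vecMulVec (φ n) (φ n))
    (x : Fin d → ℝ) :
    x ⬝ᵥ (Shat *ᵥ x) = lam * (x ⬝ᵥ x) + ∑ n, (φ n ⬝ᵥ x) ^ 2 := by
  subst hShat
  rw [add_mulVec, dotProduct_add]
  congr 1
  · simp [smul_mulVec, dotProduct_smul, smul_eq_mul]
  · rw [sum_mulVec', dotProduct_sum']
    refine Finset.sum_congr rfl fun n _ => ?_
    rw [vecMulVec_mulVec', dotProduct_smul, smul_eq_mul, dotProduct_comm, sq]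

lemma shat_posdef {d N : ℕ} (lam : ℝ) (hlam : 0 < lam) (φ : Fin N → Fin d → ℝ)
    (Shat : Matrix (Fin d) (Fin d) ℝ)
    (hShat : Shat = lam • (1 : Matrix (Fin d) (Fin d) ℝ) + ∑ n, vecMulVec (φ n) (φ n)) :
    Shat.PosDef := by
  rw [posDef_iff_dotProduct_mulVec]
  constructor
  · rw [hShat]
    unfold Matrix.IsHermitian
    rw [conjTranspose_add, conjTranspose_smul]
    congr 1
    · simp
    · rw [conjTranspose_sum]
      refine Finset.sum_congr rfl fun n _ => ?_
      ext i j
      simp [vecMulVec, conjTranspose, mul_comm]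
  · intro x hx
    have h1 : (star x : Fin d → ℝ) = x := by simp
    rw [h1, quadform lam φ Shat hShat x]
    have h0 : (0:ℝ) ≤ x ⬝ᵥ x := by
      simpa [dotProduct] using Finset.sum_nonneg fun i (_ : i ∈ Finset.univ) => mul_self_nonneg (x i)
    have h2 : 0 < x ⬝ᵥ x := by
      rcases h0.lt_or_eq with h | h
      · exact h
      · exact absurd ((dotProduct_self_eq_zero).mp h.symm) hx
    have h3 : (0:ℝ) ≤ ∑ n, (φ n ⬝ᵥ x) ^ 2 := Finset.sum_nonneg fun n _ => sq_nonneg _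
    nlinarith

lemma ridge_min {d N : ℕ} (lam : ℝ) (hlam : 0 < lam) (φ : Fin N → Fin d → ℝ)
    (Shat : Matrix (Fin d) (Fin d) ℝ)
    (hShat : Shat = lam • (1 : Matrix (Fin d) (Fin d) ℝ) + ∑ n, vecMulVec (φ n) (φ n))
    (y : Fin N → ℝ) (w : Fin d → ℝ)
    (hmin : ∀ u : Fin d → ℝ,
      (∑ n, (φ n ⬝ᵥ w - y n) ^ 2) + lam * (w ⬝ᵥ w)
        ≤ (∑ n, (φ n ⬝ᵥ u - y n) ^ 2) + lam * (u ⬝ᵥ u)) :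
    w = Shat⁻¹ *ᵥ ∑ n, y n • φ n := by
  have hpd := shat_posdef lam hlam φ Shat hShat
  set b : Fin d → ℝ := ∑ n, y n • φ n with hb
  set ws : Fin d → ℝ := Shat⁻¹ *ᵥ b with hws
  have hSw : Shat *ᵥ ws = b := by
    rw [hws, mulVec_mulVec, Matrix.mul_nonsing_inv _ (isUnit_iff_isUnit_det Shat |>.mp hpd.isUnit), one_mulVec]
  have hbdot : ∀ u : Fin d → ℝ, b ⬝ᵥ u = ∑ n, y n * (φ n ⬝ᵥ u) := by
    intro u
    rw [hb, sum_dotProduct']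
    exact Finset.sum_congr rfl fun n _ => by rw [smul_dotProduct, smul_eq_mul]
  have hexp : ∀ u : Fin d → ℝ,
      (∑ n, (φ n ⬝ᵥ u - y n) ^ 2) + lam * (u ⬝ᵥ u)
        = u ⬝ᵥ (Shat *ᵥ u) - 2 * (b ⬝ᵥ u) + ∑ n, (y n) ^ 2 := by
    intro u
    have key : (∑ n, (φ n ⬝ᵥ u - y n) ^ 2)
        = (∑ n, (φ n ⬝ᵥ u) ^ 2) - (∑ n, 2 * (y n * (φ n ⬝ᵥ u))) + ∑ n, (y n) ^ 2 := by
      rw [← Finset.sum_sub_distrib, ← Finset.sum_add_distrib]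
      exact Finset.sum_congr rfl fun n _ => by ring
    rw [quadform lam φ Shat hShat, hbdot, Finset.mul_sum, key]
    ring
  -- symmetry of Shat to handle cross terms
  have hsym : ∀ u v : Fin d → ℝ, u ⬝ᵥ (Shat *ᵥ v) = v ⬝ᵥ (Shat *ᵥ u) := by
    intro u v
    rw [dotProduct_mulVec, ← mulVec_transpose, show Shatᵀ = Shat from hpd.isHermitian, dotProduct_comm]
  have c2 : w ⬝ᵥ (Shat *ᵥ ws) = b ⬝ᵥ w := by rw [hSw, dotProduct_comm]
  have c1 : ws ⬝ᵥ (Shat *ᵥ w) = b ⬝ᵥ w := by rw [hsym, hSw, dotProduct_comm]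
  have c3 : ws ⬝ᵥ (Shat *ᵥ ws) = b ⬝ᵥ ws := by rw [hSw, dotProduct_comm]
  have hdiff : (w - ws) ⬝ᵥ (Shat *ᵥ (w - ws)) ≤ 0 := by
    have h1 := hmin ws
    rw [hexp w, hexp ws] at h1
    have e1 : (w - ws) ⬝ᵥ (Shat *ᵥ (w - ws))
        = w ⬝ᵥ (Shat *ᵥ w) - 2 * (b ⬝ᵥ w) + b ⬝ᵥ ws := by
      simp only [mulVec_sub, dotProduct_sub, sub_dotProduct, c1, c2, c3]
      ring
    linarith
  rw [quadform lam φ Shat hShat] at hdiff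
  have h0 : (0:ℝ) ≤ (w - ws) ⬝ᵥ (w - ws) := by
    simpa [dotProduct] using Finset.sum_nonneg fun i (_ : i ∈ Finset.univ) => mul_self_nonneg ((w - ws) i)
  have h3 : (0:ℝ) ≤ ∑ n, (φ n ⬝ᵥ (w - ws)) ^ 2 := Finset.sum_nonneg fun n _ => sq_nonneg _
  have hz : (w - ws) ⬝ᵥ (w - ws) = 0 := by nlinarith
  have : w - ws = 0 := dotProduct_self_eq_zero.mp hz
  rw [← sub_eq_zero]
  exact this

/-- **Equivalence between fitted Q-iteration and the model-based plug-in estimator.**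
The FQI weights, defined step-by-step as the unique global minimizers of the ridge
regression objectives, coincide with the plug-in weights `w̄_h = R̂ + M̂ w̄_{h+1}`;
in particular the two value estimates agree. -/
theorem fqi_eq_plug_in (d N H : ℕ) (hd : 1 ≤ d) (lam : ℝ) (hlam : 0 < lam)
    (φ : Fin N → Fin d → ℝ) (r' : Fin N → ℝ) (ψ : Fin N → Fin d → ℝ)
    (Shat : Matrix (Fin d) (Fin d) ℝ)
    (hShat : Shat = lam • (1 : Matrix (Fin d) (Fin d) ℝ) + ∑ n, vecMulVec (φ n) (φ n))
    (Rhat : Fin d → ℝ) (hRhat : Rhat = Shat⁻¹ *ᵥ ∑ n, r' n • φ n)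
    (Mhat : Matrix (Fin d) (Fin d) ℝ)
    (hMhat : Mhat = Shat⁻¹ * ∑ n, vecMulVec (φ n) (ψ n))
    (what wbar : ℕ → Fin d → ℝ)
    (hwhat_top : what (H + 1) = 0)
    -- `what h` is the (unique) global minimizer of the ridge objective at step `h`
    (hwhat_min : ∀ h ≤ H, ∀ w : Fin d → ℝ,
      (∑ n, (φ n ⬝ᵥ what h - r' n - ψ n ⬝ᵥ what (h + 1)) ^ 2) + lam * (what h ⬝ᵥ what h)
        ≤ (∑ n, (φ n ⬝ᵥ w - r' n - ψ n ⬝ᵥ what (h + 1)) ^ 2) + lam * (w ⬝ᵥ w))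
    (hwbar_top : wbar (H + 1) = 0)
    (hwbar : ∀ h ≤ H, wbar h = Rhat + Mhat *ᵥ wbar (h + 1)) :
    (∀ h ≤ H + 1, what h = wbar h) ∧
      ∀ ν0 : Fin d → ℝ, ν0 ⬝ᵥ what 0 = ν0 ⬝ᵥ wbar 0 := by
  -- closed form for the FQI update
  have hwhat_eq : ∀ h ≤ H,
      what h = Shat⁻¹ *ᵥ ∑ n, (r' n + ψ n ⬝ᵥ what (h + 1)) • φ n := by
    intro h hh
    refine ridge_min lam hlam φ Shat hShat (fun n => r' n + ψ n ⬝ᵥ what (h + 1)) _ fun u => ?_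
    have := hwhat_min h hh u
    simpa only [sub_sub] using this
  -- closed form for the plug-in update
  have hwbar_eq : ∀ h ≤ H,
      wbar h = Shat⁻¹ *ᵥ ∑ n, (r' n + ψ n ⬝ᵥ wbar (h + 1)) • φ n := by
    intro h hh
    rw [hwbar h hh, hRhat, hMhat, ← mulVec_mulVec, sum_mulVec']
    have e : (∑ n, vecMulVec (φ n) (ψ n) *ᵥ wbar (h + 1))
        = ∑ n, (ψ n ⬝ᵥ wbar (h + 1)) • φ n :=
      Finset.sum_congr rfl fun n _ => vecMulVec_mulVec' _ _ _
    have e2 : ((∑ n, r' n • φ n) + ∑ n, (ψ n ⬝ᵥ wbar (h + 1)) • φ n)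
        = ∑ n, (r' n + ψ n ⬝ᵥ wbar (h + 1)) • φ n := by
      rw [← Finset.sum_add_distrib]
      exact Finset.sum_congr rfl fun n _ => (add_smul _ _ _).symm
    rw [e, ← mulVec_add, e2]
  have main : ∀ k, ∀ h, h + k = H + 1 → what h = wbar h := by
    intro k
    induction k with
    | zero => intro h hh; simp at hh; rw [hh, hwhat_top, hwbar_top]
    | succ k ih =>
      intro h hh
      have hhH : h ≤ H := by omega
      have ih' : what (h + 1) = wbar (h + 1) := ih (h + 1) (by omega)
      rw [hwhat_eq h hhH, hwbar_eq h hhH, ih']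
  refine ⟨fun h hh => main (H + 1 - h) h (by omega), fun ν0 => ?_⟩
  rw [main (H + 1) 0 (by omega)]
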